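/- arXiv:1402.0223 — 10 statements merged into one kernel-verified Lean document; each statement's English description precedes it below -/
import Mathlib

section
/- Let V be a real vector space, ξ ∈ V, η : V → ℝ a linear functional with η(ξ) = 1, α : V × V → ℝ a symmetric bilinear form, and R : V × V × V → V a trilinear map such that α(R(X,Y)Z, W) + α(Z, R(X,Y)W) = 0 for all X, Y, Z, W ∈ V and R(X,Y)ξ = η(X)·Y − η(Y)·X for all X, Y ∈ V. Then α(Y, ξ) = η(Y)·α(ξ, ξ) for every Y ∈ V. -/
/-- Pointwise key step: if a symmetric bilinear form `α` satisfies
`α(R(X,Y)Z, W) + α(Z, R(X,Y)W) = 0` for a trilinear map `R` with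
`R(X,Y)ξ = η(X)Y − η(Y)X`, where `η` is a linear functional with
`η(ξ) = 1`, then `α(Y, ξ) = η(Y)·α(ξ, ξ)` for every `Y`. -/
theorem alpha_Y_xi
    {V : Type*} [AddCommGroup V] [Module ℝ V]
    (ξ : V) (η : V →ₗ[ℝ] ℝ) (hηξ : η ξ = 1)
    (α : V →ₗ[ℝ] V →ₗ[ℝ] ℝ) (hα_symm : ∀ X Y : V, α X Y = α Y X)
    (R : V →ₗ[ℝ] V →ₗ[ℝ] V →ₗ[ℝ] V)
    (hαR : ∀ X Y Z W : V, α (R X Y Z) W + α Z (R X Y W) = 0)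
    (hRξ : ∀ X Y : V, R X Y ξ = η X • Y - η Y • X) :
    ∀ Y : V, α Y ξ = η Y * α ξ ξ := by
  intro Y
  have h := hαR ξ Y ξ ξ
  rw [hRξ ξ Y, hηξ, hα_symm ξ] at h
  simp only [map_sub, map_smul, LinearMap.sub_apply, LinearMap.smul_apply,
    smul_eq_mul, one_smul, one_mul] at h
  nlinarith [h]
end

section
/- Let V be a real vector space, g a symmetric bilinear form on V, ξ ∈ V with g(ξ,ξ) = 1, η : V → ℝ the linear functional η(X) = g(X,ξ), λ and μ real constants, and S a symmetric bilinear form on V satisfying the η-Ricci soliton equation pointwise: 2·(g(X,Y) − η(X)·η(Y)) + 2·S(X,Y) + 2λ·g(X,Y) + 2μ·η(X)·η(Y) = 0 for all X, Y ∈ V. Then S(X,Y) = −(λ+1)·g(X,Y) − (μ−1)·η(X)·η(Y) for all X, Y ∈ V (so the manifold is quasi-Einstein), and if moreover n is a natural number with S(X, ξ) = −2n·η(X) for all X ∈ V, then λ + μ = 2n. -/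
/-- Pointwise η-Ricci soliton equation on a para-Kenmotsu manifold:
if `2(g(X,Y) − η(X)η(Y)) + 2S(X,Y) + 2λg(X,Y) + 2μη(X)η(Y) = 0` for a
symmetric bilinear form `S`, where `g(ξ,ξ) = 1` and `η(X) = g(X,ξ)`,
then `S(X,Y) = −(λ+1)g(X,Y) − (μ−1)η(X)η(Y)` (quasi-Einstein), and if
moreover `S(X,ξ) = −2n·η(X)` for all `X`, then `λ + μ = 2n`. -/
theorem eta_ricci_soliton_quasi_einstein
    {V : Type*} [AddCommGroup V] [Module ℝ V]
    (g : V →ₗ[ℝ] V →ₗ[ℝ] ℝ) (hg_symm : ∀ X Y : V, g X Y = g Y X)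
    (ξ : V) (hξ : g ξ ξ = 1)
    (η : V → ℝ) (hη : ∀ X : V, η X = g X ξ)
    (lam μ : ℝ)
    (S : V →ₗ[ℝ] V →ₗ[ℝ] ℝ) (hS_symm : ∀ X Y : V, S X Y = S Y X)
    (hsol : ∀ X Y : V,
      2 * (g X Y - η X * η Y) + 2 * S X Y + 2 * lam * g X Y
        + 2 * μ * (η X * η Y) = 0) :
    (∀ X Y : V, S X Y = -(lam + 1) * g X Y - (μ - 1) * (η X * η Y)) ∧
    (∀ n : ℕ, (∀ X : V, S X ξ = -(2 * (n : ℝ)) * η X) →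
      lam + μ = 2 * (n : ℝ)) := by
  have hmain : ∀ X Y : V, S X Y = -(lam + 1) * g X Y - (μ - 1) * (η X * η Y) := by
    intro X Y
    have h := hsol X Y
    nlinarith [h]
  refine ⟨hmain, fun n hn => ?_⟩
  have h1 := hmain ξ ξ
  have h2 := hn ξ
  have hηξ : η ξ = 1 := by rw [hη, hξ]
  rw [hηξ, hξ] at h1
  rw [hηξ] at h2
  nlinarith [h1, h2]
end

section
/- Assume the pointwise para-Kenmotsu η-Ricci soliton model and suppose the curvature condition R(ξ,X)·S = 0 holds, i.e. S(R(ξ,X)Y, Z) + S(Y, R(ξ,X)Z) = 0 for all X, Y, Z ∈ V, where R(ξ,X)Y = η(Y)·X − g(X,Y)·ξ. Then μ = 1, λ = 2n − 1, and S(X,Y) = −2n·g(X,Y) for all X, Y ∈ V (i.e. the manifold is Einstein). -/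
/-- Pointwise para-Kenmotsu η-Ricci soliton model satisfying
`R(ξ,X)·S = 0`, i.e. `S(R(ξ,X)Y, Z) + S(Y, R(ξ,X)Z) = 0` with
`R(ξ,X)Y = η(Y)X − g(X,Y)ξ`.  Then `μ = 1`, `λ = 2n − 1` and
`S = −2n·g` (Einstein). -/
theorem eta_ricci_soliton_R_xi_S
    {V : Type*} [AddCommGroup V] [Module ℝ V] [FiniteDimensional ℝ V]
    (n : ℕ) (hn : 1 ≤ n) (hdim : Module.finrank ℝ V = 2 * n + 1)
    (g : V →ₗ[ℝ] V →ₗ[ℝ] ℝ) (hg_symm : ∀ X Y : V, g X Y = g Y X)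
    (hg_nd : ∀ X : V, (∀ Y : V, g X Y = 0) → X = 0)
    (ξ : V) (hξ : g ξ ξ = 1)
    (η : V → ℝ) (hη : ∀ X : V, η X = g X ξ)
    (lam μ : ℝ) (hlamμ : lam + μ = 2 * (n : ℝ))
    (S : V → V → ℝ)
    (hS : ∀ X Y : V, S X Y = -(lam + 1) * g X Y - (μ - 1) * (η X * η Y))
    (Rξ : V → V → V)
    (hRξ : ∀ X Y : V, Rξ X Y = η Y • X - g X Y • ξ)
    (hcond : ∀ X Y Z : V, S (Rξ X Y) Z + S Y (Rξ X Z) = 0) :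
    μ = 1 ∧ lam = 2 * (n : ℝ) - 1 ∧
      ∀ X Y : V, S X Y = -(2 * (n : ℝ)) * g X Y := by
  have hηξ : η ξ = 1 := by rw [hη]; exact hξ
  -- key identity from hcond X ξ X
  have key : ∀ X : V, (μ - 1) * (g X X - η X * η X) = 0 := by
    intro X
    have h := hcond X ξ X
    rw [hRξ, hRξ, hS, hS] at h
    simp only [map_sub, map_smul, LinearMap.sub_apply, LinearMap.smul_apply,
      smul_eq_mul, hηξ, hη] at h
    rw [hξ, hg_symm ξ X] at h
    rw [hη]
    linear_combination h
  have hmu : μ = 1 := by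
    by_contra hne
    have hq : ∀ X : V, g X X = η X * η X := by
      intro X
      have := key X
      have h2 : g X X - η X * η X = 0 := by
        rcases mul_eq_zero.mp this with h | h
        · exact absurd (by linarith) hne
        · exact h
      linarith
    have hbil : ∀ X Y : V, g X Y = η X * η Y := by
      intro X Y
      have h1 := hq (X + Y)
      have h2 := hq X
      have h3 := hq Y
      have hηadd : η (X + Y) = η X + η Y := by simp [hη, hg_symm]
      simp only [map_add, LinearMap.add_apply, hηadd] at h1
      have hsym : g X Y = g Y X := hg_symm X Y
      nlinarith
    have hall : ∀ X : V, X = η X • ξ := by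
      intro X
      have : X - η X • ξ = 0 := by
        apply hg_nd
        intro Y
        simp only [map_sub, map_smul, LinearMap.sub_apply, LinearMap.smul_apply,
          smul_eq_mul]
        rw [hbil X Y, hbil ξ Y, hηξ]
        ring
      have := sub_eq_zero.mp this
      exact this
    have hle : Module.finrank ℝ V ≤ 1 := by
      apply finrank_le_one ξ
      intro w
      exact ⟨η w, (hall w).symm⟩
    omega
  refine ⟨hmu, by linarith, ?_⟩
  intro X Y
  rw [hS, hmu]
  have : lam = 2 * (n : ℝ) - 1 := by linarith
  rw [this]
  ring
end

section
/- Assume the pointwise para-Kenmotsu η-Ricci soliton model and suppose S(R(ξ,X)Y, Z) + S(Y, R(ξ,X)Z) = 0 for all X, Y, Z ∈ V, where R(ξ,X)Y = η(Y)·X − g(X,Y)·ξ. Then μ ≠ 0; in other words, on a para-Kenmotsu manifold satisfying R(ξ,X)·S = 0 there is no Ricci soliton (the case μ = 0) with potential vector field ξ. -/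
/-- Pointwise para-Kenmotsu η-Ricci soliton model satisfying
`R(ξ,X)·S = 0`: then `μ ≠ 0`, i.e. there is no Ricci soliton
(the case `μ = 0`) with potential vector field `ξ`. -/
theorem no_ricci_soliton_R_xi_S
    {V : Type*} [AddCommGroup V] [Module ℝ V] [FiniteDimensional ℝ V]
    (n : ℕ) (hn : 1 ≤ n) (hdim : Module.finrank ℝ V = 2 * n + 1)
    (g : V →ₗ[ℝ] V →ₗ[ℝ] ℝ) (hg_symm : ∀ X Y : V, g X Y = g Y X)
    (hg_nd : ∀ X : V, (∀ Y : V, g X Y = 0) → X = 0)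
    (ξ : V) (hξ : g ξ ξ = 1)
    (η : V → ℝ) (hη : ∀ X : V, η X = g X ξ)
    (lam μ : ℝ) (hlamμ : lam + μ = 2 * (n : ℝ))
    (S : V → V → ℝ)
    (hS : ∀ X Y : V, S X Y = -(lam + 1) * g X Y - (μ - 1) * (η X * η Y))
    (Rξ : V → V → V)
    (hRξ : ∀ X Y : V, Rξ X Y = η Y • X - g X Y • ξ)
    (hcond : ∀ X Y Z : V, S (Rξ X Y) Z + S Y (Rξ X Z) = 0) :
    μ ≠ 0 := by
  intro hμ0
  subst hμ0
  -- key: g X Z = η X * η Z for all X, Z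
  have key : ∀ X Z : V, g X Z = g X ξ * g Z ξ := by
    intro X Z
    have h := hcond X ξ Z
    simp only [hRξ, hS, hη, map_sub, map_smul, LinearMap.sub_apply,
      LinearMap.smul_apply, smul_eq_mul, hξ] at h
    rw [hg_symm ξ Z, hg_symm ξ X] at h
    linear_combination -h
  have hall : ∀ X : V, X = g X ξ • ξ := by
    intro X
    have h0 : X - g X ξ • ξ = 0 := by
      apply hg_nd
      intro Y
      simp only [map_sub, map_smul, LinearMap.sub_apply, LinearMap.smul_apply,
        smul_eq_mul]
      rw [key X Y, hg_symm ξ Y, key Y ξ, hξ]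
      ring
    exact sub_eq_zero.mp h0
  have hspan : (Submodule.span ℝ {ξ}) = ⊤ := by
    rw [Submodule.eq_top_iff']
    intro X
    rw [hall X]
    exact Submodule.smul_mem _ _ (Submodule.mem_span_singleton_self ξ)
  have hξne : ξ ≠ 0 := by
    intro h
    rw [h] at hξ
    simp at hξ
  have h1 : Module.finrank ℝ V = 1 := by
    rw [← finrank_span_singleton (K := ℝ) hξne, hspan, finrank_top]
  omega
end

section
/- Assume the pointwise para-Kenmotsu η-Ricci soliton model and let R : V × V × V → V be a trilinear map satisfying R(X,Y)ξ = η(X)·Y − η(Y)·X and η(R(X,Y)Z) = −η(X)·g(Y,Z) + η(Y)·g(X,Z) for all X, Y, Z ∈ V. Suppose the condition S(ξ,X)·R = 0 holds, i.e. for all X, Y, Z, W ∈ V: S(X,R(Y,Z)W)·ξ − S(ξ,R(Y,Z)W)·X + S(X,Y)·R(ξ,Z)W − S(ξ,Y)·R(X,Z)W + S(X,Z)·R(Y,ξ)W − S(ξ,Z)·R(Y,X)W + S(X,W)·R(Y,Z)ξ − S(ξ,W)·R(Y,Z)X = 0. Then μ = 4n + 1 and λ = −2n − 1. -/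
/-- Pointwise para-Kenmotsu η-Ricci soliton model with a trilinear
curvature `R` satisfying `R(X,Y)ξ = η(X)Y − η(Y)X` and
`η(R(X,Y)Z) = −η(X)g(Y,Z) + η(Y)g(X,Z)`, and the condition
`S(ξ,X)·R = 0`.  Then `μ = 4n + 1` and `λ = −2n − 1`. -/
theorem eta_ricci_soliton_S_xi_R
    {V : Type*} [AddCommGroup V] [Module ℝ V] [FiniteDimensional ℝ V]
    (n : ℕ) (hn : 1 ≤ n) (hdim : Module.finrank ℝ V = 2 * n + 1)
    (g : V →ₗ[ℝ] V →ₗ[ℝ] ℝ) (hg_symm : ∀ X Y : V, g X Y = g Y X)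
    (hg_nd : ∀ X : V, (∀ Y : V, g X Y = 0) → X = 0)
    (ξ : V) (hξ : g ξ ξ = 1)
    (η : V → ℝ) (hη : ∀ X : V, η X = g X ξ)
    (lam μ : ℝ) (hlamμ : lam + μ = 2 * (n : ℝ))
    (S : V → V → ℝ)
    (hS : ∀ X Y : V, S X Y = -(lam + 1) * g X Y - (μ - 1) * (η X * η Y))
    (R : V →ₗ[ℝ] V →ₗ[ℝ] V →ₗ[ℝ] V)
    (hRξ : ∀ X Y : V, R X Y ξ = η X • Y - η Y • X)
    (hηR : ∀ X Y Z : V, η (R X Y Z) = -(η X) * g Y Z + η Y * g X Z)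
    (hcond : ∀ X Y Z W : V,
      S X (R Y Z W) • ξ - S ξ (R Y Z W) • X + S X Y • R ξ Z W
        - S ξ Y • R X Z W + S X Z • R Y ξ W - S ξ Z • R Y X W
        + S X W • R Y Z ξ - S ξ W • R Y Z X = 0) :
    μ = 4 * (n : ℝ) + 1 ∧ lam = -(2 * (n : ℝ)) - 1 := by
  -- Step 1: find X, Y with g X Y ≠ g X ξ * g Y ξ
  have hd : ∃ X Y : V, g X Y - g X ξ * g Y ξ ≠ 0 := by
    by_contra h
    push_neg at h
    have hspan : ∀ w : V, ∃ c : ℝ, c • ξ = w := by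
      intro Y
      refine ⟨g Y ξ, ?_⟩
      have h0 : ∀ X : V, g (g Y ξ • ξ - Y) X = 0 := by
        intro X
        have h1 := h X Y
        have h2 := hg_symm Y X
        have h3 := hg_symm ξ X
        simp only [map_sub, map_smul, LinearMap.sub_apply, LinearMap.smul_apply,
          smul_eq_mul]
        rw [h3, h2]
        linarith
      exact sub_eq_zero.mp (hg_nd _ h0)
    have hle : Module.finrank ℝ V ≤ 1 := finrank_le_one ξ hspan
    omega
  obtain ⟨X, Y, hXY⟩ := hd
  -- Step 2: the key scalar equation from hcond X Y ξ ξ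
  have key := hcond X Y ξ ξ
  simp only [hRξ] at key
  have key2 := congrArg (fun v => g v ξ) key
  simp only [map_add, map_sub, map_smul, LinearMap.add_apply, LinearMap.sub_apply,
    LinearMap.smul_apply, smul_eq_mul, map_zero, LinearMap.zero_apply] at key2
  have hR8 : g (R Y ξ X) ξ = -(g Y ξ) * g ξ X + g ξ ξ * g Y X := by
    rw [← hη, hηR, hη, hη]
  rw [hR8] at key2
  simp only [hS, hη, map_sub, map_smul, LinearMap.sub_apply, LinearMap.smul_apply,
    smul_eq_mul, hξ, hg_symm ξ X, hg_symm ξ Y, hg_symm Y X] at key2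
  have hmain : (2 * lam + μ + 1) * (g X Y - g X ξ * g Y ξ) = 0 := by
    ring_nf at key2 ⊢
    linarith [key2]
  have h2 : 2 * lam + μ + 1 = 0 := by
    rcases mul_eq_zero.mp hmain with h | h
    · exact h
    · exact absurd h hXY
  constructor <;> linarith
end

section
/- Assume the pointwise para-Kenmotsu η-Ricci soliton model and let R : V × V × V → V be a trilinear map satisfying R(X,Y)ξ = η(X)·Y − η(Y)·X and η(R(X,Y)Z) = −η(X)·g(Y,Z) + η(Y)·g(X,Z) for all X, Y, Z ∈ V, and suppose that for all X, Y, Z, W ∈ V: S(X,R(Y,Z)W)·ξ − S(ξ,R(Y,Z)W)·X + S(X,Y)·R(ξ,Z)W − S(ξ,Y)·R(X,Z)W + S(X,Z)·R(Y,ξ)W − S(ξ,Z)·R(Y,X)W + S(X,W)·R(Y,Z)ξ − S(ξ,W)·R(Y,Z)X = 0. Then μ ≠ 0; in other words, on a para-Kenmotsu manifold satisfying S(ξ,X)·R = 0 there is no Ricci soliton (the case μ = 0) with potential vector field ξ. -/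
/-- Pointwise para-Kenmotsu η-Ricci soliton model with a trilinear
curvature `R` satisfying `R(X,Y)ξ = η(X)Y − η(Y)X` and
`η(R(X,Y)Z) = −η(X)g(Y,Z) + η(Y)g(X,Z)`, and the condition
`S(ξ,X)·R = 0`.  Then `μ ≠ 0`: there is no Ricci soliton (the case
`μ = 0`) with potential vector field `ξ`. -/
theorem no_ricci_soliton_S_xi_R
    {V : Type*} [AddCommGroup V] [Module ℝ V] [FiniteDimensional ℝ V]
    (n : ℕ) (hn : 1 ≤ n) (hdim : Module.finrank ℝ V = 2 * n + 1)
    (g : V →ₗ[ℝ] V →ₗ[ℝ] ℝ) (hg_symm : ∀ X Y : V, g X Y = g Y X)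
    (hg_nd : ∀ X : V, (∀ Y : V, g X Y = 0) → X = 0)
    (ξ : V) (hξ : g ξ ξ = 1)
    (η : V → ℝ) (hη : ∀ X : V, η X = g X ξ)
    (lam μ : ℝ) (hlamμ : lam + μ = 2 * (n : ℝ))
    (S : V → V → ℝ)
    (hS : ∀ X Y : V, S X Y = -(lam + 1) * g X Y - (μ - 1) * (η X * η Y))
    (R : V →ₗ[ℝ] V →ₗ[ℝ] V →ₗ[ℝ] V)
    (hRξ : ∀ X Y : V, R X Y ξ = η X • Y - η Y • X)
    (hηR : ∀ X Y Z : V, η (R X Y Z) = -(η X) * g Y Z + η Y * g X Z)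
    (hcond : ∀ X Y Z W : V,
      S X (R Y Z W) • ξ - S ξ (R Y Z W) • X + S X Y • R ξ Z W
        - S ξ Y • R X Z W + S X Z • R Y ξ W - S ξ Z • R Y X W
        + S X W • R Y Z ξ - S ξ W • R Y Z X = 0) :
    μ ≠ 0 := by
  intro hμ0
  subst hμ0
  have hlam : lam = 2 * (n : ℝ) := by linarith
  -- there is a nonzero X orthogonal to ξ
  obtain ⟨X, hX0, hXξ⟩ : ∃ X : V, X ≠ 0 ∧ g X ξ = 0 := by
    by_contra hc
    push_neg at hc
    have hinj : Function.Injective (g.flip ξ) := by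
      rw [injective_iff_map_eq_zero]
      intro a ha
      by_contra h0
      exact hc a h0 ha
    have := LinearMap.finrank_le_finrank_of_injective hinj
    simp [hdim, Module.finrank_self] at this
    omega
  -- key: g X Z = 0 for every Z ⊥ ξ
  have key : ∀ Z : V, g Z ξ = 0 → g X Z = 0 := by
    intro Z hZξ
    have h0 := hcond X ξ Z ξ
    simp only [hRξ, hη, hS, hξ, hXξ, hZξ, one_smul, zero_smul, smul_zero, sub_zero,
      zero_sub, mul_zero, zero_mul, mul_one, one_mul, add_zero, zero_add, map_sub,
      map_smul, smul_eq_mul, neg_zero, sub_self, smul_neg] at h0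
    have h1 := congrArg (fun v => g v ξ) h0
    have hR8 : g (R ξ Z X) ξ = - g X Z := by
      have h2 := hηR ξ Z X
      rw [hη (R ξ Z X), hη ξ, hη Z, hξ, hZξ, hg_symm ξ X, hXξ] at h2
      rw [h2, hg_symm Z X]
      ring
    simp only [map_add, map_sub, map_smul, LinearMap.add_apply, LinearMap.sub_apply,
      LinearMap.smul_apply, smul_eq_mul, LinearMap.zero_apply, map_zero, hXξ, hZξ, hξ,
      hR8, mul_zero, mul_one, zero_mul] at h1
    have hN : (0:ℝ) < 4 * (n:ℝ) + 1 := by positivity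
    nlinarith [h1, sq_nonneg (g X Z)]
  -- hence X is orthogonal to everything
  have : X = 0 := by
    apply hg_nd
    intro Y
    have hZ : g (Y - (g Y ξ) • ξ) ξ = 0 := by
      simp [map_sub, map_smul, hξ]
    have := key _ hZ
    simp [map_sub, map_smul, hXξ] at this
    simpa using this
  exact hX0 this
end

section
/- Assume the pointwise para-Kenmotsu η-Ricci soliton model. Define Q(X) = −(2n+1−μ)·X − (μ−1)·η(X)·ξ and, using R(ξ,X)Y = η(Y)·X − g(X,Y)·ξ, define W₂(ξ,X)Y = R(ξ,X)Y + (1/(2n))·(η(Y)·Q(X) − g(X,Y)·Q(ξ)). Suppose the condition W₂(ξ,X)·S = 0 holds, i.e. S(W₂(ξ,X)Y, Z) + S(Y, W₂(ξ,X)Z) = 0 for all X, Y, Z ∈ V. Then either μ = 1 and λ = 2n − 1, or μ = 2n + 1 and λ = −1. -/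
/-- Pointwise para-Kenmotsu η-Ricci soliton model with Ricci operator
`Q(X) = −(2n+1−μ)X − (μ−1)η(X)ξ` and
`W₂(ξ,X)Y = R(ξ,X)Y + (1/(2n))(η(Y)Q(X) − g(X,Y)Q(ξ))`, where
`R(ξ,X)Y = η(Y)X − g(X,Y)ξ`, satisfying `W₂(ξ,X)·S = 0`.
Then either `μ = 1` and `λ = 2n − 1`, or `μ = 2n + 1` and `λ = −1`. -/
theorem eta_ricci_soliton_W2_xi_S
    {V : Type*} [AddCommGroup V] [Module ℝ V] [FiniteDimensional ℝ V]
    (n : ℕ) (hn : 1 ≤ n) (hdim : Module.finrank ℝ V = 2 * n + 1)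
    (g : V →ₗ[ℝ] V →ₗ[ℝ] ℝ) (hg_symm : ∀ X Y : V, g X Y = g Y X)
    (hg_nd : ∀ X : V, (∀ Y : V, g X Y = 0) → X = 0)
    (ξ : V) (hξ : g ξ ξ = 1)
    (η : V → ℝ) (hη : ∀ X : V, η X = g X ξ)
    (lam μ : ℝ) (hlamμ : lam + μ = 2 * (n : ℝ))
    (S : V → V → ℝ)
    (hS : ∀ X Y : V, S X Y = -(lam + 1) * g X Y - (μ - 1) * (η X * η Y))
    (Q : V → V)
    (hQ : ∀ X : V, Q X = -(2 * (n : ℝ) + 1 - μ) • X - ((μ - 1) * η X) • ξ)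
    (W₂ : V → V → V)
    (hW₂ : ∀ X Y : V, W₂ X Y =
      (η Y • X - g X Y • ξ)
        + (1 / (2 * (n : ℝ))) • (η Y • Q X - g X Y • Q ξ))
    (hcond : ∀ X Y Z : V, S (W₂ X Y) Z + S Y (W₂ X Z) = 0) :
    (μ = 1 ∧ lam = 2 * (n : ℝ) - 1) ∨ (μ = 2 * (n : ℝ) + 1 ∧ lam = -1) := by
  have hn' : (1:ℝ) ≤ (n:ℝ) := by exact_mod_cast hn
  have h2n : (2*(n:ℝ)) ≠ 0 := by nlinarith
  -- existence of an anisotropic vector orthogonal to ξ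
  obtain ⟨X, hXξ, hXX⟩ : ∃ X : V, g X ξ = 0 ∧ g X X ≠ 0 := by
    by_contra h
    push_neg at h
    have horth : ∀ A B : V, g A ξ = 0 → g B ξ = 0 → g A B = 0 := by
      intro A B hA hB
      have h1 := h (A + B) (by simp [map_add, LinearMap.add_apply, hA, hB])
      have h2 := h A hA
      have h3 := h B hB
      have hsy := hg_symm A B
      simp [map_add, LinearMap.add_apply] at h1
      linarith
    have hker : ∀ A : V, g A ξ = 0 → A = 0 := by
      intro A hA
      apply hg_nd
      intro Y
      have hY' : g (Y - g Y ξ • ξ) ξ = 0 := by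
        simp [map_sub, map_smul, LinearMap.sub_apply, LinearMap.smul_apply, hξ]
      have h0 := horth A (Y - g Y ξ • ξ) hA hY'
      have hexp : g A (Y - g Y ξ • ξ) = g A Y - g Y ξ * g A ξ := by
        simp [map_sub, map_smul, smul_eq_mul]
      rw [hexp, hA] at h0
      linarith
    have hinj : Function.Injective (g.flip ξ) := by
      intro a b hab
      have hab' : g a ξ = g b ξ := hab
      have h0 : g (a - b) ξ = 0 := by
        simp [map_sub, LinearMap.sub_apply, hab']
      exact sub_eq_zero.mp (hker _ h0)
    have hle := LinearMap.finrank_le_finrank_of_injective hinj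
    rw [hdim, Module.finrank_self] at hle
    omega
  have hηX : η X = 0 := by rw [hη]; exact hXξ
  have hηξ : η ξ = 1 := by rw [hη]; exact hξ
  have hgξQX : g (Q X) ξ = 0 := by
    rw [hQ]
    simp [map_sub, map_smul, LinearMap.sub_apply, LinearMap.smul_apply, smul_eq_mul,
      hξ, hXξ, hηX]
  have hgξQξ : g (Q ξ) ξ = -(2*(n:ℝ)) := by
    rw [hQ]
    simp [map_sub, map_smul, LinearMap.sub_apply, LinearMap.smul_apply, smul_eq_mul,
      hξ, hηξ]
  have hgXQX : g X (Q X) = -(2*(n:ℝ)+1-μ) * g X X := by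
    rw [hQ]
    simp [map_sub, map_smul, smul_eq_mul, hηX, hXξ, hg_symm X ξ]
  have ht1 : g (W₂ X X) ξ = 0 := by
    rw [hW₂]
    simp [map_add, map_sub, map_smul, LinearMap.add_apply, LinearMap.sub_apply,
      LinearMap.smul_apply, smul_eq_mul, hηX, hXξ, hgξQX, hgξQξ, hξ]
    field_simp
    ring
  have ht2 : g X (W₂ X ξ) = (μ-1)/(2*(n:ℝ)) * g X X := by
    rw [hW₂]
    simp [map_add, map_sub, map_smul, smul_eq_mul, hηξ, hXξ, hgXQX, hξ]
    field_simp
    ring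
  have hηW1 : η (W₂ X X) = 0 := by rw [hη]; exact ht1
  have hprod : (lam + 1) * (μ - 1) = 0 := by
    have hc := hcond X X ξ
    rw [hS, hS, hηW1, hηX, hηξ, ht1, ht2] at hc
    have hc' : (lam + 1) * ((μ-1)/(2*(n:ℝ)) * g X X) = 0 := by linarith
    rcases mul_eq_zero.mp hc' with h | h
    · simp [h]
    · rcases mul_eq_zero.mp h with h' | h'
      · have : μ - 1 = 0 := by
          field_simp at h'
          rw [mul_zero] at h'
          exact h'
        simp [this]
      · exact absurd h' hXX
  rcases mul_eq_zero.mp hprod with h | h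
  · right
    constructor
    · linarith
    · linarith
  · left
    constructor
    · linarith
    · linarith
end

section
/- Assume the pointwise para-Kenmotsu η-Ricci soliton model. Define Q(X) = −(2n+1−μ)·X − (μ−1)·η(X)·ξ and, using R(ξ,X)Y = η(Y)·X − g(X,Y)·ξ, define W₂(ξ,X)Y = R(ξ,X)Y + (1/(2n))·(η(Y)·Q(X) − g(X,Y)·Q(ξ)), and suppose S(W₂(ξ,X)Y, Z) + S(Y, W₂(ξ,X)Z) = 0 for all X, Y, Z ∈ V. Then μ ≠ 0; in other words, on a para-Kenmotsu manifold satisfying W₂(ξ,X)·S = 0 there is no Ricci soliton (the case μ = 0) with potential vector field ξ. -/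
/-- Pointwise para-Kenmotsu η-Ricci soliton model with Ricci operator
`Q(X) = −(2n+1−μ)X − (μ−1)η(X)ξ` and
`W₂(ξ,X)Y = R(ξ,X)Y + (1/(2n))(η(Y)Q(X) − g(X,Y)Q(ξ))`, where
`R(ξ,X)Y = η(Y)X − g(X,Y)ξ`, satisfying `W₂(ξ,X)·S = 0`.
Then `μ ≠ 0`: there is no Ricci soliton (the case `μ = 0`) with
potential vector field `ξ`. -/
theorem no_ricci_soliton_W2_xi_S
    {V : Type*} [AddCommGroup V] [Module ℝ V] [FiniteDimensional ℝ V]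
    (n : ℕ) (hn : 1 ≤ n) (hdim : Module.finrank ℝ V = 2 * n + 1)
    (g : V →ₗ[ℝ] V →ₗ[ℝ] ℝ) (hg_symm : ∀ X Y : V, g X Y = g Y X)
    (hg_nd : ∀ X : V, (∀ Y : V, g X Y = 0) → X = 0)
    (ξ : V) (hξ : g ξ ξ = 1)
    (η : V → ℝ) (hη : ∀ X : V, η X = g X ξ)
    (lam μ : ℝ) (hlamμ : lam + μ = 2 * (n : ℝ))
    (S : V → V → ℝ)
    (hS : ∀ X Y : V, S X Y = -(lam + 1) * g X Y - (μ - 1) * (η X * η Y))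
    (Q : V → V)
    (hQ : ∀ X : V, Q X = -(2 * (n : ℝ) + 1 - μ) • X - ((μ - 1) * η X) • ξ)
    (W₂ : V → V → V)
    (hW₂ : ∀ X Y : V, W₂ X Y =
      (η Y • X - g X Y • ξ)
        + (1 / (2 * (n : ℝ))) • (η Y • Q X - g X Y • Q ξ))
    (hcond : ∀ X Y Z : V, S (W₂ X Y) Z + S Y (W₂ X Z) = 0) :
    μ ≠ 0 := by
  intro hμ
  subst hμ
  have hn' : (0:ℝ) < (n:ℝ) := by exact_mod_cast hn
  have h2n : (2 * (n:ℝ)) ≠ 0 := by positivity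
  have hlam : lam = 2 * (n:ℝ) := by linarith
  -- g of W₂ X Y against an arbitrary Z
  have hgW : ∀ X Y Z : V, g (W₂ X Y) Z
      = (1 / (2 * (n:ℝ))) * (g Y ξ) * (g X ξ * g Z ξ - g X Z) := by
    intro X Y Z
    rw [hW₂, hQ, hQ]
    simp only [hη, map_add, map_sub, map_smul, LinearMap.add_apply, LinearMap.sub_apply,
      LinearMap.smul_apply, smul_eq_mul, hξ, hg_symm ξ Z]
    field_simp
    ring
  have hgsξ : ∀ Z : V, g ξ Z = g Z ξ := fun Z => hg_symm ξ Z
  -- key consequence: g X Z = η X η Z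
  have key : ∀ X Z : V, g X Z = g X ξ * g Z ξ := by
    intro X Z
    have h := hcond X ξ Z
    rw [hS, hS] at h
    simp only [hη] at h
    rw [hg_symm ξ (W₂ X Z)] at h
    simp only [hgW, hξ] at h
    rw [hlam] at h
    have h2n1 : (0:ℝ) < 2 * (n:ℝ) + 1 := by positivity
    field_simp at h
    nlinarith [h]
  -- nondegeneracy contradiction: kernel of g(·,ξ) is nontrivial
  set f : V →ₗ[ℝ] ℝ := g.flip ξ with hf
  have hfker : LinearMap.ker f ≠ ⊥ := by
    intro hbot
    have hinj : Function.Injective f := LinearMap.ker_eq_bot.mp hbot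
    have := LinearMap.finrank_le_finrank_of_injective hinj
    rw [hdim] at this
    simp [Module.finrank_self] at this
    omega
  obtain ⟨X, hXmem, hX0⟩ := Submodule.exists_mem_ne_zero_of_ne_bot hfker
  have hXξ : g X ξ = 0 := hXmem
  apply hX0
  apply hg_nd
  intro Y
  rw [key X Y, hXξ, zero_mul]
end

section
/- Assume the pointwise para-Kenmotsu η-Ricci soliton model and let R : V × V × V → V be a trilinear map satisfying R(X,Y)ξ = η(X)·Y − η(Y)·X, η(R(X,Y)Z) = −η(X)·g(Y,Z) + η(Y)·g(X,Z), and R(ξ,X)Y = η(Y)·X − g(X,Y)·ξ for all X, Y, Z ∈ V. Define Q(X) = −(2n+1−μ)·X − (μ−1)·η(X)·ξ and W₂(X,Y)Z = R(X,Y)Z + (1/(2n))·(g(X,Z)·Q(Y) − g(Y,Z)·Q(X)). Suppose the condition S(ξ,X)·W₂ = 0 holds, i.e. for all X, Y, Z, U ∈ V: S(X,W₂(Y,Z)U)·ξ − S(ξ,W₂(Y,Z)U)·X + S(X,Y)·W₂(ξ,Z)U − S(ξ,Y)·W₂(X,Z)U + S(X,Z)·W₂(Y,ξ)U − S(ξ,Z)·W₂(Y,X)U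 + S(X,U)·W₂(Y,Z)ξ − S(ξ,U)·W₂(Y,Z)X = 0. Then μ² − 2(n+1)·μ + 2n + 1 = 0; equivalently, either μ = 1 and λ = 2n − 1, or μ = 2n + 1 and λ = −1. -/
/-- Pointwise para-Kenmotsu η-Ricci soliton model with a trilinear
curvature `R` satisfying `R(X,Y)ξ = η(X)Y − η(Y)X`,
`η(R(X,Y)Z) = −η(X)g(Y,Z) + η(Y)g(X,Z)` and
`R(ξ,X)Y = η(Y)X − g(X,Y)ξ`, Ricci operator
`Q(X) = −(2n+1−μ)X − (μ−1)η(X)ξ` and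
`W₂(X,Y)Z = R(X,Y)Z + (1/(2n))(g(X,Z)Q(Y) − g(Y,Z)Q(X))`, satisfying
`S(ξ,X)·W₂ = 0`.  Then `μ² − 2(n+1)μ + 2n + 1 = 0`; equivalently,
either `μ = 1` and `λ = 2n − 1`, or `μ = 2n + 1` and `λ = −1`. -/
theorem eta_ricci_soliton_S_xi_W2
    {V : Type*} [AddCommGroup V] [Module ℝ V] [FiniteDimensional ℝ V]
    (n : ℕ) (hn : 1 ≤ n) (hdim : Module.finrank ℝ V = 2 * n + 1)
    (g : V →ₗ[ℝ] V →ₗ[ℝ] ℝ) (hg_symm : ∀ X Y : V, g X Y = g Y X)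
    (hg_nd : ∀ X : V, (∀ Y : V, g X Y = 0) → X = 0)
    (ξ : V) (hξ : g ξ ξ = 1)
    (η : V → ℝ) (hη : ∀ X : V, η X = g X ξ)
    (lam μ : ℝ) (hlamμ : lam + μ = 2 * (n : ℝ))
    (S : V → V → ℝ)
    (hS : ∀ X Y : V, S X Y = -(lam + 1) * g X Y - (μ - 1) * (η X * η Y))
    (R : V →ₗ[ℝ] V →ₗ[ℝ] V →ₗ[ℝ] V)
    (hRξ : ∀ X Y : V, R X Y ξ = η X • Y - η Y • X)
    (hηR : ∀ X Y Z : V, η (R X Y Z) = -(η X) * g Y Z + η Y * g X Z)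
    (hRξX : ∀ X Y : V, R ξ X Y = η Y • X - g X Y • ξ)
    (Q : V → V)
    (hQ : ∀ X : V, Q X = -(2 * (n : ℝ) + 1 - μ) • X - ((μ - 1) * η X) • ξ)
    (W₂ : V → V → V → V)
    (hW₂ : ∀ X Y Z : V, W₂ X Y Z =
      R X Y Z + (1 / (2 * (n : ℝ))) • (g X Z • Q Y - g Y Z • Q X))
    (hcond : ∀ X Y Z U : V,
      S X (W₂ Y Z U) • ξ - S ξ (W₂ Y Z U) • X + S X Y • W₂ ξ Z U
        - S ξ Y • W₂ X Z U + S X Z • W₂ Y ξ U - S ξ Z • W₂ Y X U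
        + S X U • W₂ Y Z ξ - S ξ U • W₂ Y Z X = 0) :
    μ ^ 2 - 2 * ((n : ℝ) + 1) * μ + 2 * (n : ℝ) + 1 = 0 ∧
      ((μ = 1 ∧ lam = 2 * (n : ℝ) - 1) ∨ (μ = 2 * (n : ℝ) + 1 ∧ lam = -1)) := by
  -- basic facts
  have hn2 : (2 * (n : ℝ)) ≠ 0 := by
    have : (n : ℝ) ≠ 0 := Nat.cast_ne_zero.mpr (by omega)
    exact mul_ne_zero two_ne_zero this
  have ηξ : η ξ = 1 := by rw [hη, hξ]
  have ηsmul : ∀ (a : ℝ) (X : V), η (a • X) = a * η X := by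
    intro a X; simp [hη, map_smul]
  have ηadd : ∀ X Y : V, η (X + Y) = η X + η Y := by
    intro X Y; simp [hη, map_add]
  have ηsub : ∀ X Y : V, η (X - Y) = η X - η Y := by
    intro X Y; simp [hη, map_sub]
  have ηzero : η (0 : V) = 0 := by simp [hη]
  -- η ∘ Q
  have ηQ : ∀ X : V, η (Q X) = -(2 * (n : ℝ)) * η X := by
    intro X
    rw [hQ, ηsub, ηsmul, ηsmul, ηξ]
    ring
  -- η ∘ W₂ = 0
  have ηW : ∀ X Y Z : V, η (W₂ X Y Z) = 0 := by
    intro X Y Z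
    rw [hW₂, ηadd, hηR, ηsmul, ηsub, ηsmul, ηsmul, ηQ, ηQ]
    have hgY : g X ξ = η X := (hη X).symm
    field_simp
    ring
  -- S with ξ
  have hSξ : ∀ X Y Z U : V, S ξ (W₂ X Y Z) = 0 := by
    intro X Y Z U
    rw [hS, ηξ, ηW]
    have : g ξ (W₂ X Y Z) = 0 := by
      rw [hg_symm, ← hη, ηW]
    rw [this]; ring
  -- apply η to the condition
  have key : ∀ X Y Z U : V, S X (W₂ Y Z U) = 0 := by
    intro X Y Z U
    have h := congrArg η (hcond X Y Z U)
    simp only [ηadd, ηsub, ηsmul, ηzero, ηξ, ηW, hSξ X Y Z U] at h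
    have h2 : S ξ (W₂ Y Z U) = 0 := hSξ Y Z U U
    rw [h2] at h
    linarith [h]
  -- hence (lam+1) * g X W₂ = 0
  have key2 : ∀ X Y Z U : V, (lam + 1) * g X (W₂ Y Z U) = 0 := by
    intro X Y Z U
    have h := key X Y Z U
    rw [hS, ηW] at h
    linarith [h]
  -- μ = 1 conclusion helper
  by_cases hl : lam = -1
  · have hμ : μ = 2 * (n : ℝ) + 1 := by linarith
    constructor
    · rw [hμ]; ring
    · right; exact ⟨hμ, hl⟩
  · -- λ + 1 ≠ 0, hence W₂ = 0
    have hl1 : lam + 1 ≠ 0 := fun h => hl (by linarith)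
    have hW0 : ∀ Y Z U : V, W₂ Y Z U = 0 := by
      intro Y Z U
      apply hg_nd
      intro X
      rw [hg_symm]
      have := key2 X Y Z U
      exact (mul_eq_zero.mp this).resolve_left hl1
    -- compute W₂ ξ Z ξ
    have hWξ : ∀ Z : V, ((μ - 1) / (2 * (n : ℝ))) • (Z - η Z • ξ) = 0 := by
      intro Z
      have h0 := hW0 ξ Z ξ
      rw [hW₂, hRξX, hQ, hQ, hξ, ηξ] at h0
      have hZξ : g Z ξ = η Z := (hη Z).symm
      rw [hZξ] at h0
      rw [← h0]
      match_scalars <;> field_simp <;> ring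
    by_cases hμ : μ = 1
    · have hlam : lam = 2 * (n : ℝ) - 1 := by linarith
      constructor
      · rw [hμ]; ring
      · left; exact ⟨hμ, hlam⟩
    · -- μ ≠ 1 leads to contradiction with dimension
      exfalso
      have hc : ((μ - 1) / (2 * (n : ℝ))) ≠ 0 :=
        div_ne_zero (fun h => hμ (by linarith)) hn2
      have hspan : ∀ Z : V, Z = η Z • ξ := by
        intro Z
        have := hWξ Z
        rcases smul_eq_zero.mp this with h | h
        · exact absurd h hc
        · exact sub_eq_zero.mp h
      have hξ0 : ξ ≠ 0 := by
        intro h; rw [h] at hξ; simp at hξ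
      have htop : (⊤ : Submodule ℝ V) = Submodule.span ℝ {ξ} := by
        apply le_antisymm
        · intro Z _
          rw [hspan Z]
          exact Submodule.smul_mem _ _ (Submodule.mem_span_singleton_self ξ)
        · exact le_top
      have h1 : Module.finrank ℝ V = 1 := by
        rw [← finrank_top ℝ V, htop, finrank_span_singleton hξ0]
      omega
end

section
/- Assume the pointwise para-Kenmotsu η-Ricci soliton model and let R : V × V × V → V be a trilinear map satisfying R(X,Y)ξ = η(X)·Y − η(Y)·X, η(R(X,Y)Z) = −η(X)·g(Y,Z) + η(Y)·g(X,Z), and R(ξ,X)Y = η(Y)·X − g(X,Y)·ξ for all X, Y, Z ∈ V. Define Q(X) = −(2n+1−μ)·X − (μ−1)·η(X)·ξ and W₂(X,Y)Z = R(X,Y)Z + (1/(2n))·(g(X,Z)·Q(Y) − g(Y,Z)·Q(X)), and suppose that for all X, Y, Z, U ∈ V: S(X,W₂(Y,Z)U)·ξ − S(ξ,W₂(Y,Z)U)·X + S(X,Y)·W₂(ξ,Z)U − S(ξ,Y)·W₂(X,Z)U + S(X,Z)·W₂(Y,ξ)U − S(ξ,Z)·W₂(Y,X)U + S(X,U)·W₂(Y,Z)ξ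 − S(ξ,U)·W₂(Y,Z)X = 0. Then μ ≠ 0; in other words, on a para-Kenmotsu manifold satisfying S(ξ,X)·W₂ = 0 there is no Ricci soliton (the case μ = 0) with potential vector field ξ. -/
/-- Pointwise para-Kenmotsu η-Ricci soliton model with a trilinear
curvature `R` satisfying `R(X,Y)ξ = η(X)Y − η(Y)X`,
`η(R(X,Y)Z) = −η(X)g(Y,Z) + η(Y)g(X,Z)` and
`R(ξ,X)Y = η(Y)X − g(X,Y)ξ`, Ricci operator
`Q(X) = −(2n+1−μ)X − (μ−1)η(X)ξ` and
`W₂(X,Y)Z = R(X,Y)Z + (1/(2n))(g(X,Z)Q(Y) − g(Y,Z)Q(X))`, satisfying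
`S(ξ,X)·W₂ = 0`.  Then `μ ≠ 0`: there is no Ricci soliton (the case
`μ = 0`) with potential vector field `ξ`. -/
theorem no_ricci_soliton_S_xi_W2
    {V : Type*} [AddCommGroup V] [Module ℝ V] [FiniteDimensional ℝ V]
    (n : ℕ) (hn : 1 ≤ n) (hdim : Module.finrank ℝ V = 2 * n + 1)
    (g : V →ₗ[ℝ] V →ₗ[ℝ] ℝ) (hg_symm : ∀ X Y : V, g X Y = g Y X)
    (hg_nd : ∀ X : V, (∀ Y : V, g X Y = 0) → X = 0)
    (ξ : V) (hξ : g ξ ξ = 1)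
    (η : V → ℝ) (hη : ∀ X : V, η X = g X ξ)
    (lam μ : ℝ) (hlamμ : lam + μ = 2 * (n : ℝ))
    (S : V → V → ℝ)
    (hS : ∀ X Y : V, S X Y = -(lam + 1) * g X Y - (μ - 1) * (η X * η Y))
    (R : V →ₗ[ℝ] V →ₗ[ℝ] V →ₗ[ℝ] V)
    (hRξ : ∀ X Y : V, R X Y ξ = η X • Y - η Y • X)
    (hηR : ∀ X Y Z : V, η (R X Y Z) = -(η X) * g Y Z + η Y * g X Z)
    (hRξX : ∀ X Y : V, R ξ X Y = η Y • X - g X Y • ξ)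
    (Q : V → V)
    (hQ : ∀ X : V, Q X = -(2 * (n : ℝ) + 1 - μ) • X - ((μ - 1) * η X) • ξ)
    (W₂ : V → V → V → V)
    (hW₂ : ∀ X Y Z : V, W₂ X Y Z =
      R X Y Z + (1 / (2 * (n : ℝ))) • (g X Z • Q Y - g Y Z • Q X))
    (hcond : ∀ X Y Z U : V,
      S X (W₂ Y Z U) • ξ - S ξ (W₂ Y Z U) • X + S X Y • W₂ ξ Z U
        - S ξ Y • W₂ X Z U + S X Z • W₂ Y ξ U - S ξ Z • W₂ Y X U
        + S X U • W₂ Y Z ξ - S ξ U • W₂ Y Z X = 0) :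
    μ ≠ 0 := by

  intro hmu
  subst hmu
  have hlam : lam = 2 * (n : ℝ) := by linarith
  have hnpos : (0:ℝ) < (n : ℝ) := by exact_mod_cast hn
  have h2n : (2 * (n:ℝ)) ≠ 0 := by positivity
  -- existence of a nonzero vector orthogonal to ξ
  obtain ⟨e, he0, heη⟩ : ∃ e : V, e ≠ 0 ∧ g e ξ = 0 := by
    by_contra h
    push_neg at h
    have hinj : Function.Injective (g.flip ξ) := by
      rw [← LinearMap.ker_eq_bot, Submodule.eq_bot_iff]
      intro x hx
      by_contra hx0
      exact h x hx0 (by simpa using hx)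
    have hle := LinearMap.finrank_le_finrank_of_injective hinj
    rw [hdim, Module.finrank_self] at hle
    omega
  -- g (Q X) ξ = -2n * g X ξ
  have hQξ : ∀ X : V, g (Q X) ξ = -(2 * (n:ℝ)) * g X ξ := by
    intro X
    rw [hQ]
    simp [hη, hξ]
    ring
  -- η ∘ W₂ = 0
  have hW0 : ∀ X Y Z : V, g (W₂ X Y Z) ξ = 0 := by
    intro X Y Z
    have hR' : g (R X Y Z) ξ = -(g X ξ) * g Y Z + g Y ξ * g X Z := by
      rw [← hη, ← hη, ← hη]; exact hηR X Y Z
    rw [hW₂]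
    simp only [map_add, map_sub, map_smul, LinearMap.add_apply,
      LinearMap.sub_apply, LinearMap.smul_apply, smul_eq_mul]
    rw [hR', hQξ, hQξ]
    field_simp
    ring
  -- the key consequence: W₂ ξ e ξ = 0
  set W := W₂ ξ e ξ with hWdef
  have hWξ : g W ξ = 0 := hW0 ξ e ξ
  have hSξW : S ξ W = 0 := by
    rw [hS, hη, hη, hg_symm ξ W, hWξ]
    ring
  have hSXW : ∀ X : V, S X W = 0 := by
    intro X
    have hc := congrArg (fun v => g v ξ) (hcond X ξ e ξ)
    simp only [map_add, map_sub, map_smul, LinearMap.add_apply,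
      LinearMap.sub_apply, LinearMap.smul_apply, LinearMap.zero_apply,
      map_zero, smul_eq_mul] at hc
    rw [hW0, hW0, hW0, hW0, hξ, hW0 ξ e X] at hc
    rw [← hWdef, hSξW] at hc
    linarith [hc]
  have hgXW : ∀ X : V, g W X = 0 := by
    intro X
    have h1 := hSXW X
    rw [hS, hη, hη, hWξ] at h1
    have hlam1 : lam + 1 ≠ 0 := by rw [hlam]; positivity
    rw [hg_symm]
    have : -(lam+1) * g X W = 0 := by linarith [h1]
    exact (mul_eq_zero.mp this).resolve_left (neg_ne_zero.mpr hlam1)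
  have hWzero : W = 0 := hg_nd W hgXW
  -- but W₂ ξ e ξ = (-1/(2n)) • e ≠ 0
  have hQe : Q e = -(2 * (n:ℝ) + 1) • e := by
    rw [hQ, hη, heη]
    simp
  have hQξ' : Q ξ = -(2 * (n:ℝ)) • ξ := by
    rw [hQ, hη, hξ]
    match_scalars
    ring
  have hRe : R ξ e ξ = e := by
    rw [hRξX, hη, hξ, heη]
    simp
  have hWval : W = (-(1 / (2 * (n:ℝ)))) • e := by
    rw [hWdef, hW₂, hRe, hQe, hQξ', hξ, heη]
    match_scalars <;> (try field_simp) <;> ring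
  rw [hWval] at hWzero
  have : e = 0 := by
    have h2 : (-(1 / (2 * (n:ℝ)))) ≠ 0 := neg_ne_zero.mpr (by positivity)
    exact (smul_eq_zero.mp hWzero).resolve_left h2
  exact he0 this
end
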